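/- arXiv:1608.01110 — 2 statements merged into one kernel-verified Lean document; each statement's English description precedes it below -/
import Mathlib

section
/- Let 𝒩 be a nonempty set, k a field of characteristic 0, K = k((ε)), φ : 𝒩 → k extended additively to words, and T the K-valued mould with T^∅ = 1 and T^{n₁⋯n_r}(ε) = 1/((φ(n₁)+ε)⋯(φ(n₁)+⋯+φ(n_r)+rε)). Let (U_-, U_+) be the Birkhoff decomposition of T and define the k-valued mould R by R^{n̲} := −r(n̲) · (residue of U_-^{n̲}). Then for every word n̲ with φ(n̲) ≠ 0, one has U_-^{n̲} = 0 and R^{n̲} = 0. -/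
open scoped Classical

/-- Shuffle coefficient: the number of ways the word `n` can be obtained by interleaving
the letters of `a` and `b` while preserving their internal orders. -/
noncomputable def sh {𝒩 : Type*} : List 𝒩 → List 𝒩 → List 𝒩 → ℕ
  | [], b, n => if b = n then 1 else 0
  | a, [], n => if a = n then 1 else 0
  | _ :: _, _ :: _, [] => 0
  | x :: a, y :: b, z :: n =>
      (if x = z then sh a (y :: b) n else 0) + (if y = z then sh (x :: a) b n else 0)

/-- Mould multiplication: `(M × N)^n = ∑_{n = a b} M^a N^b`. -/
noncomputable def mmul {𝒩 A : Type*} [Semiring A] (M N : List 𝒩 → A) : List 𝒩 → A :=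
  fun n => ∑ i ∈ Finset.range (n.length + 1), M (n.take i) * N (n.drop i)

/-- The unit mould `𝟙`. -/
noncomputable def munit {𝒩 A : Type*} [Semiring A] : List 𝒩 → A :=
  fun n => if n = [] then 1 else 0

/-- Membership in `K_- = ε⁻¹ k[ε⁻¹]`: all coefficients of nonnegative powers vanish. -/
def Kminus {k : Type*} [Field k] (f : LaurentSeries k) : Prop :=
  ∀ n : ℤ, 0 ≤ n → f.coeff n = 0

/-- Membership in `K_+ = k[[ε]]`: all coefficients of negative powers vanish. -/
def Kplus {k : Type*} [Field k] (f : LaurentSeries k) : Prop :=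
  ∀ n : ℤ, n < 0 → f.coeff n = 0

/-- Additive extension of `φ : 𝒩 → k` to words: `φ(n₁⋯n_r) = φ(n₁) + ⋯ + φ(n_r)`. -/
def phiw {𝒩 k : Type*} [AddCommMonoid k] (φ : 𝒩 → k) (l : List 𝒩) : k :=
  (l.map φ).sum

/-- The mould `I`: value `1` on words of length `1`, and `0` otherwise. -/
noncomputable def Imould {𝒩 A : Type*} [Semiring A] : List 𝒩 → A :=
  fun n => if n.length = 1 then 1 else 0

/-- The indeterminate `ε` of `K = k((ε))`. -/
noncomputable def eps (k : Type*) [Field k] : LaurentSeries k :=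
  HahnSeries.single (1 : ℤ) (1 : k)

/-- The mould `T`: `T^∅ = 1` and
`T^{n₁⋯n_r}(ε) = 1/((φ(n₁)+ε)(φ(n₁)+φ(n₂)+2ε)⋯(φ(n₁)+⋯+φ(n_r)+rε))`. -/
noncomputable def Tdef {𝒩 k : Type*} [Field k] (φ : 𝒩 → k) (l : List 𝒩) :
    LaurentSeries k :=
  (∏ i ∈ Finset.range l.length,
      ((HahnSeries.C (phiw φ (l.take (i + 1))) : LaurentSeries k) + (i + 1 : ℕ) • eps k))⁻¹

section MouldAux

variable {k : Type*} [Field k]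

lemma Kplus_zero : Kplus (0 : LaurentSeries k) := fun _ _ => rfl

lemma Kplus_one : Kplus (1 : LaurentSeries k) := by
  intro n hn
  rw [HahnSeries.coeff_one, if_neg]
  omega

lemma Kplus_add {f g : LaurentSeries k} (hf : Kplus f) (hg : Kplus g) : Kplus (f + g) := by
  intro n hn
  rw [HahnSeries.coeff_add, hf n hn, hg n hn, add_zero]

lemma Kplus_smul {a : k} {f : LaurentSeries k} (hf : Kplus f) : Kplus (a • f) := by
  intro n hn
  rw [HahnSeries.coeff_smul, hf n hn, smul_zero]

lemma Kplus_sum {ι : Type*} {s : Finset ι} {f : ι → LaurentSeries k}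
    (h : ∀ i ∈ s, Kplus (f i)) : Kplus (∑ i ∈ s, f i) := by
  classical
  induction s using Finset.induction_on with
  | empty => simpa using Kplus_zero
  | insert x s hx ih =>
    rw [Finset.sum_insert hx]
    exact Kplus_add (h _ (Finset.mem_insert_self _ _))
      (ih fun i hi => h i (Finset.mem_insert_of_mem hi))

lemma Kplus_mul {f g : LaurentSeries k} (hf : Kplus f) (hg : Kplus g) : Kplus (f * g) := by
  intro n hn
  rw [HahnSeries.coeff_mul]
  refine Finset.sum_eq_zero fun ij hij => ?_
  rw [Finset.mem_addAntidiagonal] at hij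
  obtain ⟨h1, h2, h3⟩ := hij
  rcases lt_or_ge ij.1 0 with h | h
  · rw [hf _ h, zero_mul]
  · have : ij.2 < 0 := by omega
    rw [hg _ this, mul_zero]

lemma Kplus_C (a : k) : Kplus (HahnSeries.C a : LaurentSeries k) := by
  intro n hn
  rw [HahnSeries.C_apply, HahnSeries.coeff_single_of_ne]
  omega

lemma Kplus_eps : Kplus (eps k) := by
  intro n hn
  rw [eps, HahnSeries.coeff_single_of_ne]
  omega

lemma Kplus_eps_pow (M : ℕ) : Kplus ((eps k) ^ M) := by
  induction M with
  | zero => simpa using Kplus_one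
  | succ m ih => rw [pow_succ]; exact Kplus_mul ih Kplus_eps

lemma Kplus_Kminus_zero {f : LaurentSeries k} (hp : Kplus f) (hm : Kminus f) : f = 0 := by
  ext n
  rcases lt_or_ge n 0 with h | h
  · rw [hp n h]; rfl
  · rw [hm n h]; rfl

lemma Kplus_neg {f : LaurentSeries k} (hf : Kplus f) : Kplus (-f) := by
  intro n hn
  rw [HahnSeries.coeff_neg, hf n hn, neg_zero]

lemma eps_pow_single (M : ℕ) : (eps k) ^ M = HahnSeries.single (M : ℤ) 1 := by
  induction M with
  | zero => simp
  | succ m ih =>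
    rw [pow_succ, ih, eps, HahnSeries.single_mul_single]
    push_cast
    rw [one_mul]

lemma eps_ne_zero : (eps k) ≠ 0 := by
  intro h
  have := congrArg (fun f => HahnSeries.coeff f 1) h
  simp [eps, HahnSeries.coeff_single_same] at this

lemma eps_pow_mul_coeff (M : ℕ) (f : LaurentSeries k) (n : ℤ) :
    ((eps k) ^ M * f).coeff n = f.coeff (n - M) := by
  rw [eps_pow_single]
  have h := HahnSeries.coeff_single_mul_add (r := (1:k)) (x := f) (a := n - M) (b := (M:ℤ))
  rw [sub_add_cancel] at h
  rw [h, one_mul]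

lemma eventually_Kplus (f : LaurentSeries k) : ∃ N : ℕ, ∀ M ≥ N, Kplus ((eps k) ^ M * f) := by
  rcases eq_or_ne f 0 with rfl | hf
  · exact ⟨0, fun M _ => by rw [mul_zero]; exact fun _ _ => rfl⟩
  · refine ⟨(-f.order).toNat, fun M hM => ?_⟩
    intro n hn
    rw [eps_pow_mul_coeff]
    apply HahnSeries.coeff_eq_zero_of_lt_order
    have h1 : (-f.order) ≤ ((-f.order).toNat : ℤ) := Int.self_le_toNat _
    have h2 : ((-f.order).toNat : ℤ) ≤ (M : ℤ) := by exact_mod_cast hM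
    omega


noncomputable def linf (a : k) (j : ℕ) : LaurentSeries k :=
  HahnSeries.C a + (j : k) • eps k

lemma smul_eq_C_mul (a : k) (f : LaurentSeries k) : a • f = HahnSeries.C a * f := by
  ext n
  rw [HahnSeries.coeff_smul, HahnSeries.C_apply]
  have h := HahnSeries.coeff_single_mul_add (r := a) (x := f) (a := n) (b := (0:ℤ))
  rw [add_zero] at h
  rw [h, smul_eq_mul]

lemma smul_mul_assoc' (a : k) (f g : LaurentSeries k) : (a • f) * g = a • (f * g) := by
  rw [smul_eq_C_mul, smul_eq_C_mul, mul_assoc]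

lemma mul_smul_comm' (a : k) (f g : LaurentSeries k) : f * (a • g) = a • (f * g) := by
  rw [smul_eq_C_mul, smul_eq_C_mul, mul_comm f, mul_assoc, mul_comm f]

lemma ksmul_inv (a : k) (f : LaurentSeries k) : (a • f)⁻¹ = a⁻¹ • f⁻¹ := by
  rw [smul_eq_C_mul, smul_eq_C_mul, mul_inv, map_inv₀]

lemma linf_coeff_zero (a : k) (j : ℕ) : (linf a j).coeff 0 = a := by
  rw [linf, HahnSeries.coeff_add, HahnSeries.C_apply, HahnSeries.coeff_single_same,
    HahnSeries.coeff_smul, eps, HahnSeries.coeff_single_of_ne (by norm_num), smul_zero, add_zero]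

lemma linf_coeff_one (a : k) (j : ℕ) : (linf a j).coeff 1 = (j : k) := by
  rw [linf, HahnSeries.coeff_add, HahnSeries.C_apply,
    HahnSeries.coeff_single_of_ne (by norm_num),
    HahnSeries.coeff_smul, eps, HahnSeries.coeff_single_same, smul_eq_mul, mul_one, zero_add]

lemma linf_ne_zero_of_const (a : k) (j : ℕ) (ha : a ≠ 0) : linf a j ≠ 0 := by
  intro h
  have := congrArg (fun f => HahnSeries.coeff f 0) h
  simp only [HahnSeries.coeff_zero] at this
  rw [linf_coeff_zero] at this
  exact ha this

lemma linf_ne_zero [CharZero k] (a : k) (j : ℕ) (hj : 1 ≤ j) : linf a j ≠ 0 := by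
  intro h
  have := congrArg (fun f => HahnSeries.coeff f 1) h
  simp only [HahnSeries.coeff_zero] at this
  rw [linf_coeff_one] at this
  have : j = 0 := by exact_mod_cast this
  omega

lemma Kplus_linf (a : k) (j : ℕ) : Kplus (linf a j) := by
  intro n hn
  rw [linf, HahnSeries.coeff_add, HahnSeries.C_apply, HahnSeries.coeff_single_of_ne (by omega),
    HahnSeries.coeff_smul, eps, HahnSeries.coeff_single_of_ne (by omega), smul_zero, add_zero]

lemma linf_inv_step (a : k) (ha : a ≠ 0) (j : ℕ) :
    (linf a j)⁻¹ = a⁻¹ • 1 - ((j : k) * a⁻¹) • (eps k * (linf a j)⁻¹) := by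
  have hl : linf a j ≠ 0 := linf_ne_zero_of_const a j ha
  apply mul_left_cancel₀ hl
  rw [mul_inv_cancel₀ hl, mul_sub, mul_smul_comm', mul_smul_comm',
    show eps k * (linf a j)⁻¹ = (linf a j)⁻¹ * eps k from mul_comm _ _, ← mul_assoc,
    mul_inv_cancel₀ hl, one_mul, mul_one]
  nth_rewrite 1 [linf]
  rw [smul_add, smul_smul, mul_comm a⁻¹ ((j:k)), add_sub_cancel_right,
    smul_eq_C_mul, ← map_mul, inv_mul_cancel₀ ha, map_one]

lemma linf_inv_expansion (a : k) (ha : a ≠ 0) (j M : ℕ) :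
    (linf a j)⁻¹ = (∑ i ∈ Finset.range M, ((-(j:k))^i * (a⁻¹)^(i+1)) • (eps k)^i)
      + ((-(j:k))^M * (a⁻¹)^M) • ((eps k)^M * (linf a j)⁻¹) := by
  induction M with
  | zero => simp
  | succ M ih =>
    nth_rewrite 2 [linf_inv_step a ha j] at ih
    rw [Finset.sum_range_succ]
    calc (linf a j)⁻¹
        = (∑ i ∈ Finset.range M, ((-(j:k))^i * (a⁻¹)^(i+1)) • (eps k)^i)
          + ((-(j:k))^M * (a⁻¹)^M) •
            ((eps k)^M * (a⁻¹ • 1 - ((j : k) * a⁻¹) • (eps k * (linf a j)⁻¹))) := ih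
      _ = _ := by
          rw [mul_sub, mul_smul_comm', mul_one, mul_smul_comm', ← mul_assoc, ← pow_succ,
            smul_sub, smul_smul, smul_smul]
          rw [sub_eq_add_neg, ← neg_smul, ← add_assoc]
          congr 2
          · congr 1
            ring
          · congr 1
            ring

lemma eps_pow_mul_eps_inv (m : ℕ) : (eps k)^(m+1) * (eps k)⁻¹ = (eps k)^m := by
  rw [pow_succ, mul_assoc, mul_inv_cancel₀ eps_ne_zero, mul_one]

lemma linf_zero_inv (j : ℕ) : (linf (0:k) j)⁻¹ = (j:k)⁻¹ • (eps k)⁻¹ := by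
  rw [linf, map_zero, zero_add, ksmul_inv]

variable {𝒩 : Type*} (φ : 𝒩 → k)

lemma phiw_nil : phiw φ ([] : List 𝒩) = 0 := rfl

lemma phiw_append (a b : List 𝒩) : phiw φ (a ++ b) = phiw φ a + phiw φ b := by
  simp [phiw]

lemma phiw_take_drop (l : List 𝒩) (q m : ℕ) :
    phiw φ ((l.drop q).take m) = phiw φ (l.take (q + m)) - phiw φ (l.take q) := by
  have h : l.take (q + m) = l.take q ++ (l.drop q).take m := by
    rw [List.take_drop]
    have h2 : l.take q = (l.take (q+m)).take q := by
      rw [List.take_take, min_eq_left (by omega)]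
    rw [h2, List.take_append_drop]
  rw [h, phiw_append]
  ring

lemma Tdef_eq (l : List 𝒩) :
    Tdef φ l = ∏ i ∈ Finset.range l.length, (linf (phiw φ (l.take (i + 1))) (i + 1))⁻¹ := by
  rw [Tdef, ← Finset.prod_inv_distrib]
  congr 1
  funext i
  rw [linf, Nat.cast_smul_eq_nsmul]

lemma Tdef_nil : Tdef φ ([] : List 𝒩) = 1 := by
  rw [Tdef_eq]
  simp

lemma key_T (l : List 𝒩) (q : ℕ) (hq : q < l.length) (h0 : phiw φ (l.take q) = 0) :
    Tdef φ (l.drop q) = Tdef φ (l.dropLast.drop q) * (linf (phiw φ l) (l.length - q))⁻¹ := by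
  have hlen1 : (l.drop q).length = (l.length - 1 - q) + 1 := by
    rw [List.length_drop]; omega
  have hlen2 : (l.dropLast.drop q).length = l.length - 1 - q := by
    rw [List.length_drop, List.length_dropLast]
  have hdl : l.dropLast.drop q = (l.drop q).take (l.length - 1 - q) := by
    rw [List.dropLast_eq_take, List.take_drop]
    have h : q + (l.length - 1 - q) = l.length - 1 := by omega
    rw [h]
  rw [Tdef_eq, Tdef_eq, hlen1, hlen2, Finset.prod_range_succ]
  congr 1
  · apply Finset.prod_congr rfl
    intro x hx
    rw [Finset.mem_range] at hx
    rw [hdl, List.take_take, min_eq_left (by omega)]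
  · have h1 : (l.drop q).take (l.length - 1 - q + 1) = l.drop q := by
      rw [← hlen1, List.take_length]
    rw [h1]
    have h2 : phiw φ (l.drop q) = phiw φ l := by
      conv_rhs => rw [← List.take_append_drop q l]
      rw [phiw_append, h0, zero_add]
    rw [h2]
    have h3 : l.length - 1 - q + 1 = l.length - q := by omega
    rw [h3]

end MouldAux

section MasterSec
variable {𝒩 k : Type*} [Field k] [CharZero k]

theorem master (φ : 𝒩 → k) (Um Up : List 𝒩 → LaurentSeries k)
    (hUm0 : Um [] = 1)
    (hUm : ∀ n : List 𝒩, n ≠ [] → Kminus (Um n))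
    (hUp : ∀ n : List 𝒩, Kplus (Up n))
    (hEq : mmul Um (Tdef φ) = Up) :
    ∀ (N : ℕ) (l : List 𝒩), l.length ≤ N →
      ((phiw φ l ≠ 0 → Um l = 0) ∧
        ∀ m : ℕ, Kplus (∑ q ∈ Finset.range (l.length + 1),
          (((l.length - q : ℕ) : k))^m •
            ((eps k)^m * (Um (l.take q) * Tdef φ (l.drop q))))) := by
  intro N
  induction N with
  | zero =>
    intro l hl
    have hnil : l = [] := List.length_eq_zero_iff.mp (Nat.le_zero.mp hl)
    subst hnil
    constructor
    · intro h; exact absurd (phiw_nil φ) h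
    · intro m
      cases m with
      | zero => simpa [hUm0, Tdef_nil] using (Kplus_one (k := k))
      | succ m => simpa using (Kplus_zero (k := k))
  | succ N ih =>
    intro l hl
    rcases Nat.lt_or_ge l.length (N + 1) with h | h
    · exact ih l (by omega)
    have hr : l.length = N + 1 := le_antisymm hl h
    have hlnil : l ≠ [] := by
      intro hc; rw [hc] at hr; simp at hr
    have hl' : l.dropLast.length = N := by rw [List.length_dropLast, hr]; omega
    have hpre : ∀ q, q ≤ N → l.dropLast.take q = l.take q := by
      intro q hq
      rw [List.dropLast_eq_take, List.take_take, min_eq_left (by omega)]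
    have ihA : ∀ q, q < l.length → phiw φ (l.take q) ≠ 0 → Um (l.take q) = 0 := by
      intro q hq hphi
      exact (ih (l.take q) (by rw [List.length_take]; omega)).1 hphi
    have ihB := (ih l.dropLast (by omega)).2
    -- the shifted corollary
    have COR : ∀ t : ℕ, Kplus (∑ q ∈ Finset.range (l.length),
        (((l.length - q : ℕ) : k))^t •
          ((eps k)^t * (Um (l.take q) * Tdef φ (l.dropLast.drop q)))) := by
      intro t
      have e1 : ∀ q ∈ Finset.range l.length,
          (((l.length - q:ℕ)):k)^t • ((eps k)^t * (Um (l.take q) * Tdef φ (l.dropLast.drop q)))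
          = ∑ s ∈ Finset.range (t+1), (t.choose s : k) •
              ((eps k)^(t-s) * ((((N - q:ℕ):k))^s • ((eps k)^s *
                (Um (l.dropLast.take q) * Tdef φ (l.dropLast.drop q))))) := by
        intro q hq
        rw [Finset.mem_range, hr] at hq
        have hcast : ((l.length - q : ℕ) : k) = ((N - q : ℕ):k) + 1 := by
          rw [hr]
          have h2 : N + 1 - q = (N - q) + 1 := by omega
          rw [h2]
          push_cast
          ring
        rw [hcast, hpre q (by omega), add_pow, Finset.sum_smul]
        apply Finset.sum_congr rfl
        intro s hs
        rw [Finset.mem_range] at hs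
        rw [one_pow, mul_one]
        conv_rhs => rw [mul_smul_comm', smul_smul, ← mul_assoc, ← pow_add]
        have hts : t - s + s = t := by omega
        rw [hts, mul_comm ((t.choose s : k))]
      rw [Finset.sum_congr rfl e1, Finset.sum_comm]
      apply Kplus_sum
      intro s hs
      rw [← Finset.smul_sum, ← Finset.mul_sum, hr]
      have ihB' := ihB s
      rw [hl'] at ihB'
      exact Kplus_smul (Kplus_mul (Kplus_eps_pow _) ihB')
    -- the main expansion core, for nonresonant words
    have CORE : phiw φ l ≠ 0 → ∀ m : ℕ, Kplus (∑ q ∈ Finset.range (l.length),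
        (((l.length - q : ℕ) : k))^m •
          ((eps k)^m * (Um (l.take q) * Tdef φ (l.drop q)))) := by
      intro hc m
      choose Nf hNf using fun q : ℕ => eventually_Kplus
        (Um (l.take q) * (Tdef φ (l.dropLast.drop q) * (linf (phiw φ l) (l.length - q))⁻¹))
      set M := (Finset.range l.length).sup Nf with hM
      have e2 : ∀ q ∈ Finset.range l.length,
          (((l.length - q:ℕ)):k)^m • ((eps k)^m * (Um (l.take q) * Tdef φ (l.drop q)))
          = (∑ i ∈ Finset.range M, ((-1:k)^i * (((phiw φ l)⁻¹))^(i+1)) •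
                ((((l.length - q:ℕ)):k)^(m+i) • ((eps k)^(m+i) *
                  (Um (l.take q) * Tdef φ (l.dropLast.drop q)))))
            + ((-1:k)^M * (((phiw φ l)⁻¹))^M) •
                ((((l.length - q:ℕ)):k)^(m+M) • ((eps k)^(m+M) *
                  (Um (l.take q) * (Tdef φ (l.dropLast.drop q) *
                    (linf (phiw φ l) (l.length - q))⁻¹)))) := by
        intro q hq
        rw [Finset.mem_range] at hq
        by_cases h0 : phiw φ (l.take q) = 0
        · conv_lhs => rw [key_T φ l q hq h0, linf_inv_expansion (phiw φ l) hc (l.length - q) M,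
            mul_add (Tdef φ (l.dropLast.drop q)), mul_add (Um (l.take q)),
            mul_add ((eps k)^m)]
          rw [smul_add]
          congr 1
          · rw [Finset.mul_sum, Finset.mul_sum, Finset.mul_sum, Finset.smul_sum]
            apply Finset.sum_congr rfl
            intro i _
            simp only [smul_eq_C_mul, map_mul, map_pow, map_neg, map_one]
            ring
          · simp only [smul_eq_C_mul, map_mul, map_pow, map_neg, map_one]
            ring
        · have hU : Um (l.take q) = 0 := ihA q hq h0
          rw [hU]
          simp
      rw [Finset.sum_congr rfl e2, Finset.sum_add_distrib]
      apply Kplus_add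
      · rw [Finset.sum_comm]
        apply Kplus_sum
        intro i _
        rw [← Finset.smul_sum]
        exact Kplus_smul (COR (m+i))
      · apply Kplus_sum
        intro q hq
        apply Kplus_smul
        apply Kplus_smul
        exact hNf q (m+M) (le_trans (Finset.le_sup hq) (by omega))
    have hup : ∑ q ∈ Finset.range (l.length + 1), Um (l.take q) * Tdef φ (l.drop q) = Up l := by
      have h := congrFun hEq l
      simpa only [mmul] using h
    constructor
    · -- A part
      intro hphi
      have hsum := hup
      rw [Finset.sum_range_succ, List.take_length, List.drop_length, Tdef_nil, mul_one] at hsum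
      have hX : Kplus (∑ q ∈ Finset.range l.length, Um (l.take q) * Tdef φ (l.drop q)) := by
        have h0 := CORE hphi 0
        simpa using h0
      have hKp : Kplus (Um l) := by
        have hrw : Um l = Up l + -(∑ q ∈ Finset.range l.length, Um (l.take q) * Tdef φ (l.drop q)) := by
          rw [← hsum]; ring
        rw [hrw]
        exact Kplus_add (hUp l) (Kplus_neg hX)
      exact Kplus_Kminus_zero hKp (hUm l hlnil)
    · -- B part
      intro m
      cases m with
      | zero =>
        simp only [pow_zero, one_smul, one_mul]
        rw [hup]
        exact hUp l
      | succ m₀ =>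
        rw [Finset.sum_range_succ]
        have hlast : (((l.length - l.length : ℕ)):k)^(m₀+1) •
            ((eps k)^(m₀+1) * (Um (l.take l.length) * Tdef φ (l.drop l.length))) = 0 := by
          rw [Nat.sub_self]
          norm_num
        rw [hlast, add_zero]
        by_cases hc : phiw φ l = 0
        · have e3 : ∀ q ∈ Finset.range l.length,
              (((l.length - q:ℕ)):k)^(m₀+1) • ((eps k)^(m₀+1) *
                (Um (l.take q) * Tdef φ (l.drop q)))
              = (((l.length - q:ℕ)):k)^m₀ • ((eps k)^m₀ *
                (Um (l.take q) * Tdef φ (l.dropLast.drop q))) := by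
            intro q hq
            rw [Finset.mem_range] at hq
            by_cases h0 : phiw φ (l.take q) = 0
            · rw [key_T φ l q hq h0, hc, linf_zero_inv]
              rw [mul_smul_comm', mul_smul_comm', mul_smul_comm', smul_smul]
              have hw : ((l.length - q : ℕ):k) ≠ 0 := by
                have hq2 : l.length - q ≠ 0 := by omega
                exact Nat.cast_ne_zero.mpr hq2
              have hscal : (((l.length - q:ℕ)):k)^(m₀+1) * (((l.length - q:ℕ)):k)⁻¹
                  = (((l.length - q:ℕ)):k)^m₀ := by
                rw [pow_succ, mul_assoc, mul_inv_cancel₀ hw, mul_one]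
              have hZ : (eps k)^(m₀+1) * (Um (l.take q) *
                    (Tdef φ (l.dropLast.drop q) * (eps k)⁻¹))
                  = (eps k)^m₀ * (Um (l.take q) * Tdef φ (l.dropLast.drop q)) := by
                rw [← eps_pow_mul_eps_inv m₀]
                ring
              rw [hscal, hZ]
            · rw [ihA q hq h0]
              simp
          rw [Finset.sum_congr rfl e3]
          exact COR m₀
        · exact CORE hc (m₀+1)

end MasterSec

/-- with `(U₋, U₊)` the Birkhoff decomposition of `T` and
`R^n = −r(n) · (residue of U₋^n)`, every word `n` with `φ(n) ≠ 0` satisfies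
`U₋^n = 0` and `R^n = 0`. -/
theorem Uminus_and_R_vanish_on_nonresonant
    {𝒩 k : Type*} [Nonempty 𝒩] [Field k] [CharZero k] (φ : 𝒩 → k)
    (Um Up : List 𝒩 → LaurentSeries k)
    (hUm0 : Um [] = 1) (hUp0 : Up [] = 1)
    (hUm : ∀ n : List 𝒩, n ≠ [] → Kminus (Um n))
    (hUp : ∀ n : List 𝒩, Kplus (Up n))
    (hEq : mmul Um (Tdef φ) = Up)
    (R : List 𝒩 → k) (hR : R = fun n => -(n.length : k) * (Um n).coeff (-1)) :
    ∀ n : List 𝒩, phiw φ n ≠ 0 → Um n = 0 ∧ R n = 0 := by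
  intro n hn
  have hM := master φ Um Up hUm0 hUm hUp hEq n.length n le_rfl
  have hz : Um n = 0 := hM.1 hn
  refine ⟨hz, ?_⟩
  rw [hR]
  simp [hz]
end

section
/- Let 𝒩 be a nonempty set and k a field of characteristic 0. For a k-valued mould S with S^∅ = 1, define the mould logarithm log S := Σ_{j≥1} ((−1)^{j−1}/j) (S − 𝟙)^{×j} (this is well-defined: on a word n̲ only the terms with j ≤ r(n̲) contribute, since (S−𝟙)^{×j} vanishes on words of length < j). If S is symmetral, then log S is alternal. -/
open scoped Classical

/-- Powers of a mould for mould multiplication. -/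
noncomputable def mpow {𝒩 A : Type*} [Semiring A] (M : List 𝒩 → A) : ℕ → (List 𝒩 → A)
  | 0 => munit
  | j + 1 => mmul M (mpow M j)

/-- A mould `M` is symmetral if `M^∅ = 1` and
`∑_n sh^{a,b}_n M^n = M^a M^b` for all nonempty words `a`, `b`. -/
def Symmetral {𝒩 A : Type*} [CommSemiring A] (M : List 𝒩 → A) : Prop :=
  M [] = 1 ∧ ∀ a b : List 𝒩, a ≠ [] → b ≠ [] →
    (∑ᶠ n : List 𝒩, (sh a b n : A) * M n) = M a * M b

/-- A mould `M` is alternal if `M^∅ = 0` and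
`∑_n sh^{a,b}_n M^n = 0` for all nonempty words `a`, `b`. -/
def Alternal {𝒩 A : Type*} [CommSemiring A] (M : List 𝒩 → A) : Prop :=
  M [] = 0 ∧ ∀ a b : List 𝒩, a ≠ [] → b ≠ [] →
    (∑ᶠ n : List 𝒩, (sh a b n : A) * M n) = 0

/-- The mould logarithm `log S = ∑_{j ≥ 1} ((−1)^{j−1}/j) (S − 𝟙)^{×j}`; on a word `n`
only the terms with `j ≤ r(n)` contribute (when `S^∅ = 1`, `(S − 𝟙)^{×j}` vanishes on
words of length `< j`), so it is given by the finite sum below. -/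
noncomputable def mlog {𝒩 A : Type*} [Field A] (S : List 𝒩 → A) : List 𝒩 → A :=
  fun n => ∑ j ∈ Finset.Icc 1 n.length,
    ((-1 : A) ^ (j - 1) / (j : A)) * mpow (fun m => S m - munit m) j n


section AuxPoly
open Polynomial

noncomputable def wpoly : Polynomial (Polynomial ℚ) :=
  X * (1 + C X) + C X

noncomputable def Kq (j p q : ℕ) : ℚ := ((wpoly ^ j).coeff p).coeff q

lemma K_zero (p q : ℕ) : Kq 0 p q = if p = 0 ∧ q = 0 then 1 else 0 := by
  simp only [Kq, pow_zero]
  rcases eq_or_ne p 0 with rfl | hp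
  · rcases eq_or_ne q 0 with rfl | hq
    · simp
    · simp [coeff_one, hq, Polynomial.coeff_one]
  · simp [coeff_one, hp]

lemma mul_wpoly (F : Polynomial (Polynomial ℚ)) :
    F * wpoly = F * X + (F * X) * C X + F * C X := by
  rw [wpoly]; ring

lemma wpow_coeff_zero (j : ℕ) :
    (wpoly ^ (j+1)).coeff 0 = (wpoly ^ j).coeff 0 * X := by
  rw [pow_succ, mul_wpoly]
  rw [coeff_add, coeff_add, coeff_mul_C, coeff_mul_C, mul_coeff_zero, coeff_X_zero,
    mul_zero, zero_mul, zero_add]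
  rw [zero_add]

lemma wpow_coeff_succ (j p : ℕ) :
    (wpoly ^ (j+1)).coeff (p+1) =
      (wpoly ^ j).coeff p + ((wpoly ^ j).coeff p + (wpoly ^ j).coeff (p+1)) * X := by
  rw [pow_succ, mul_wpoly]
  rw [coeff_add, coeff_add, coeff_mul_C, coeff_mul_C, coeff_mul_X]
  ring

lemma K_rec00 (j : ℕ) : Kq (j+1) 0 0 = 0 := by
  simp [Kq, wpow_coeff_zero]

lemma K_rec0q (j q : ℕ) : Kq (j+1) 0 (q+1) = Kq j 0 q := by
  simp [Kq, wpow_coeff_zero]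

lemma K_recp0 (j p : ℕ) : Kq (j+1) (p+1) 0 = Kq j p 0 := by
  simp [Kq, wpow_coeff_succ]

lemma K_recpq (j p q : ℕ) :
    Kq (j+1) (p+1) (q+1) = Kq j p (q+1) + Kq j (p+1) q + Kq j p q := by
  simp [Kq, wpow_coeff_succ, coeff_mul_X]
  ring


lemma K_bound (j : ℕ) : ∀ p q : ℕ, (j < p ∨ j < q ∨ p + q < j) → Kq j p q = 0 := by
  induction j with
  | zero =>
    intro p q h; rw [K_zero, if_neg]; omega
  | succ j ih =>
    rintro (_|p) (_|q) h
    · exact K_rec00 j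
    · rw [K_rec0q]; apply ih; omega
    · rw [K_recp0]; apply ih; omega
    · rw [K_recpq, ih p (q+1) (by omega), ih (p+1) q (by omega), ih p q (by omega)]; ring

lemma K_p0 (j : ℕ) : ∀ p, Kq j p 0 = if j = p then 1 else 0 := by
  induction j with
  | zero =>
    rintro (_|p)
    · rw [K_zero]; simp
    · rw [K_zero]; simp
  | succ j ih =>
    rintro (_|p)
    · rw [K_rec00]; simp
    · rw [K_recp0, ih]; simp

lemma K_0q (j : ℕ) : ∀ q, Kq j 0 q = if j = q then 1 else 0 := by
  induction j with
  | zero =>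
    rintro (_|q)
    · rw [K_zero]; simp
    · rw [K_zero]; simp
  | succ j ih =>
    rintro (_|q)
    · rw [K_rec00]; simp
    · rw [K_rec0q, ih]; simp

lemma K_deriv (j p q : ℕ) :
    (p+1 : ℚ) * Kq (j+1) (p+1) q + (p : ℚ) * Kq (j+1) p q
      = (j+1 : ℚ) * (Kq j p q + Kq (j+1) p q) := by
  have hw : derivative (wpoly) = 1 + C X := by
    simp [wpoly, derivative_C]
  have hid : derivative (wpoly ^ (j+1)) + X * derivative (wpoly ^ (j+1))
      = ((j+1 : ℕ) : Polynomial (Polynomial ℚ)) * (wpoly ^ j + wpoly ^ (j+1)) := by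
    rw [derivative_pow, hw, Nat.add_sub_cancel, map_natCast (C : Polynomial ℚ →+* _)]
    have h1 : ((1:Polynomial (Polynomial ℚ)) + X) * (1 + C X) = 1 + wpoly := by
      rw [wpoly]; ring
    calc ((j+1 : ℕ) : Polynomial (Polynomial ℚ)) * wpoly ^ j * (1 + C X)
          + X * (((j+1 : ℕ) : Polynomial (Polynomial ℚ)) * wpoly ^ j * (1 + C X))
        = ((j+1 : ℕ) : Polynomial (Polynomial ℚ)) * wpoly ^ j * ((1+X) * (1 + C X)) := by
          ring
      _ = _ := by rw [h1]; ring
  -- coefficient extraction helpers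
  have hcast : ∀ (P : Polynomial (Polynomial ℚ)) (n m r : ℕ),
      (((((n : ℕ) : Polynomial (Polynomial ℚ)) * P).coeff m).coeff r) = (n : ℚ) * ((P.coeff m).coeff r) := by
    intro P n m r
    rw [← map_natCast (C : Polynomial ℚ →+* _), coeff_C_mul, ← map_natCast (C : ℚ →+* _),
      coeff_C_mul]
  have hder : ∀ (m r : ℕ), ((derivative (wpoly ^ (j+1))).coeff m).coeff r
      = (m+1 : ℚ) * Kq (j+1) (m+1) r := by
    intro m r
    rw [coeff_derivative,
      show ((m:Polynomial ℚ)+1) = C ((m:ℚ)+1) by rw [map_add, map_one, map_natCast],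
      coeff_mul_C]
    simp only [Kq]
    push_cast
    ring
  have h2 := congrArg (fun P => (Polynomial.coeff P p).coeff q) hid
  rw [coeff_add, Polynomial.coeff_add, hcast, coeff_add, Polynomial.coeff_add, hder] at h2
  cases p with
  | zero =>
    rw [mul_coeff_zero, coeff_X_zero, zero_mul, Polynomial.coeff_zero] at h2
    push_cast at h2 ⊢
    simp only [Kq] at h2 ⊢
    linarith [h2]
  | succ p =>
    rw [coeff_X_mul, hder] at h2
    push_cast at h2 ⊢
    simp only [Kq] at h2 ⊢
    linarith [h2]

end AuxPoly

noncomputable def Kk (K : Type*) [DivisionRing K] (j p q : ℕ) : K := ((Kq j p q : ℚ) : K)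

section AuxSigma
variable {k : Type*} [Field k] [CharZero k]

-- derivative identity rearranged, in k, valid for j ≥ 1
lemma K_deriv' (j p q : ℕ) (hj : 1 ≤ j) :
    ((-1:k))^(j-1)/j * ((p+1 : k) * Kk k j (p+1) q)
      = (-1)^(j-1) * (Kk k (j-1) p q + Kk k j p q) - (-1)^(j-1)/j * ((p:k) * Kk k j p q) := by
  obtain ⟨j, rfl⟩ : ∃ j', j = j' + 1 := ⟨j - 1, by omega⟩
  have h := K_deriv j p q
  have h2 : (p+1 : k) * Kk k (j+1) (p+1) q + (p : k) * Kk k (j+1) p q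
      = (j+1 : k) * (Kk k j p q + Kk k (j+1) p q) := by
    simp only [Kk]
    exact_mod_cast congrArg (fun x : ℚ => (x : k)) h
  have hj1 : ((j:k) + 1) ≠ 0 := by
    have := Nat.cast_add_one_ne_zero (R := k) j
    exact_mod_cast this
  simp only [Nat.add_sub_cancel]
  field_simp
  push_cast
  ring_nf
  ring_nf at h2
  linear_combination h2

lemma telescope (p q : ℕ) (N : ℕ) (hN : 1 ≤ N) :
    ∑ j ∈ Finset.Icc 1 N, ((-1:k))^(j-1) * (Kk k (j-1) p q + Kk k j p q)
      = Kk k 0 p q + (-1)^(N-1) * Kk k N p q := by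
  induction N with
  | zero => omega
  | succ N ih =>
    rcases Nat.eq_or_lt_of_le hN with h1 | h1
    · simp [← h1]
    · have hN' : 1 ≤ N := by omega
      rw [Finset.sum_Icc_succ_top (by omega), ih hN']
      have : ((-1:k))^(N+1-1) = -(-1)^(N-1) := by
        obtain ⟨N', rfl⟩ : ∃ N', N = N' + 1 := ⟨N - 1, by omega⟩
        simp [pow_succ]
      rw [Nat.add_sub_cancel] at *
      rw [this]
      ring


lemma K_1q (j q : ℕ) : Kq (j+1) 1 q
    = (j+1) * ((if j = q then (1:ℚ) else 0) + (if j+1 = q then 1 else 0)) := by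
  have h := K_deriv j 0 q
  rw [K_0q, K_0q] at h
  push_cast at h
  linarith

lemma sigma_one (q N : ℕ) (hq : 1 ≤ q) (hN : q + 1 ≤ N) :
    ∑ j ∈ Finset.Icc 1 N, ((-1:k))^(j-1)/j * Kk k j 1 q = 0 := by
  have hterm : ∀ j ∈ Finset.Icc 1 N, ((-1:k))^(j-1)/j * Kk k j 1 q
      = (if j = q then ((-1:k))^(j-1) else 0) + (if j = q+1 then ((-1:k))^(j-1) else 0) := by
    intro j hj
    simp only [Finset.mem_Icc] at hj
    obtain ⟨j, rfl⟩ : ∃ j', j = j' + 1 := ⟨j - 1, by omega⟩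
    have hk : Kk k (j+1) 1 q
        = (j+1 : k) * ((if j = q then (1:k) else 0) + (if j+1 = q then 1 else 0)) := by
      simp only [Kk, K_1q]
      push_cast [apply_ite (fun x : ℚ => (x : k))]
      ring
    rw [hk, Nat.add_sub_cancel]
    have hj1 : ((j:k) + 1) ≠ 0 := by
      have := Nat.cast_add_one_ne_zero (R := k) j
      exact_mod_cast this
    split_ifs <;> try omega
    all_goals simp
    all_goals field_simp
  rw [Finset.sum_congr rfl hterm, Finset.sum_add_distrib,
    Finset.sum_ite_eq' (Finset.Icc 1 N) q (fun j => ((-1:k))^(j-1)),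
    Finset.sum_ite_eq' (Finset.Icc 1 N) (q+1) (fun j => ((-1:k))^(j-1))]
  rw [if_pos (by simp [Finset.mem_Icc]; omega), if_pos (by simp [Finset.mem_Icc]; omega)]
  obtain ⟨q, rfl⟩ : ∃ q', q = q' + 1 := ⟨q - 1, by omega⟩
  simp [pow_succ]

lemma sigma_zero (p : ℕ) : ∀ q N : ℕ, 1 ≤ p → 1 ≤ q → p + q ≤ N →
    ∑ j ∈ Finset.Icc 1 N, ((-1:k))^(j-1)/j * Kk k j p q = 0 := by
  induction p with
  | zero => omega
  | succ p ih =>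
    intro q N _ hq hN
    rcases Nat.eq_zero_or_pos p with rfl | hp
    · exact sigma_one q N hq (by omega)
    · have ihp := ih q N hp hq (by omega)
      have key : (p+1 : k) * ∑ j ∈ Finset.Icc 1 N, ((-1:k))^(j-1)/j * Kk k j (p+1) q = 0 := by
        rw [Finset.mul_sum]
        have : ∀ j ∈ Finset.Icc 1 N, (p+1:k) * (((-1:k))^(j-1)/j * Kk k j (p+1) q)
            = ((-1:k))^(j-1) * (Kk k (j-1) p q + Kk k j p q)
              - ((-1:k))^(j-1)/j * ((p:k) * Kk k j p q) := by
          intro j hj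
          simp only [Finset.mem_Icc] at hj
          rw [← K_deriv' j p q hj.1]
          ring
        rw [Finset.sum_congr rfl this, Finset.sum_sub_distrib, telescope p q N (by omega)]
        have h0 : Kk k 0 p q = 0 := by
          simp only [Kk, K_zero]; rw [if_neg (by omega)]; simp
        have hN0 : Kk k N p q = 0 := by
          simp only [Kk, K_bound N p q (by omega)]; simp
        rw [h0, hN0]
        have : ∑ j ∈ Finset.Icc 1 N, ((-1:k))^(j-1)/j * ((p:k) * Kk k j p q)
            = (p:k) * ∑ j ∈ Finset.Icc 1 N, ((-1:k))^(j-1)/j * Kk k j p q := by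
          rw [Finset.mul_sum]; apply Finset.sum_congr rfl; intro j _; ring
        rw [this, ihp]
        ring
      have hne : (p+1 : k) ≠ 0 := by
        have := Nat.cast_add_one_ne_zero (R := k) p
        exact_mod_cast this
      exact (mul_eq_zero.mp key).resolve_left hne


end AuxSigma

section AuxSh
variable {𝒩 : Type*}

lemma sh_nil_left (b n : List 𝒩) : sh [] b n = if b = n then 1 else 0 := by
  cases b <;> simp only [sh]

lemma sh_nil_right (a n : List 𝒩) : sh a [] n = if a = n then 1 else 0 := by
  cases a <;> simp only [sh]

lemma sh_nil (a b : List 𝒩) : sh a b [] = if a = [] ∧ b = [] then 1 else 0 := by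
  cases a with
  | nil => cases b <;> simp [sh_nil_left]
  | cons x a => cases b with
    | nil => simp [sh_nil_right]
    | cons y b => simp [sh]

lemma sh_cons_match (a b : List 𝒩) (z : 𝒩) (n : List 𝒩) :
    sh a b (z :: n) =
      (match a with | [] => 0 | x :: a' => if x = z then sh a' b n else 0)
      + (match b with | [] => 0 | y :: b' => if y = z then sh a b' n else 0) := by
  cases a with
  | nil =>
    cases b with
    | nil => simp [sh_nil_left]
    | cons y b' =>
      simp only [sh_nil_left]
      rcases eq_or_ne y z with rfl | h
      · simp [List.cons_eq_cons]
      · simp [List.cons_eq_cons, h]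
  | cons x a' =>
    cases b with
    | nil =>
      simp only [sh_nil_right]
      rcases eq_or_ne x z with rfl | h
      · simp [List.cons_eq_cons, sh_nil_right]
      · simp [List.cons_eq_cons, h]
    | cons y b' => simp only [sh]

lemma sh_perm : ∀ (n a b : List 𝒩), sh a b n ≠ 0 → n.Perm (a ++ b) := by
  intro n
  induction n with
  | nil =>
    intro a b h
    rw [sh_nil] at h
    rcases a with _ | ⟨x, a⟩
    · rcases b with _ | ⟨y, b⟩
      · simp
      · simp at h
    · simp at h
  | cons z n ih =>
    intro a b h
    rw [sh_cons_match] at h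
    have h' : (match a with | [] => 0 | x :: a' => if x = z then sh a' b n else 0) ≠ 0
        ∨ (match b with | [] => 0 | y :: b' => if y = z then sh a b' n else 0) ≠ 0 := by
      by_contra hc
      push_neg at hc
      omega
    rcases h' with h' | h'
    · rcases a with _ | ⟨x, a'⟩
      · simp at h'
      · simp only at h'
        rcases eq_or_ne x z with rfl | hx
        · rw [if_pos rfl] at h'
          exact ((ih a' b h').cons x)
        · rw [if_neg hx] at h'; exact absurd rfl h'
    · rcases b with _ | ⟨y, b'⟩
      · simp at h'
      · simp only at h'
        rcases eq_or_ne y z with rfl | hy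
        · rw [if_pos rfl] at h'
          exact ((ih a b' h').cons y).trans (List.perm_middle.symm)
        · rw [if_neg hy] at h'; exact absurd rfl h'


noncomputable def shz (z : 𝒩) : List 𝒩 → List 𝒩 → List 𝒩 → ℕ
  | [], _, _ => 0
  | x :: a', b, n => if x = z then sh a' b n else 0

noncomputable def shz2 (z : 𝒩) : List 𝒩 → List 𝒩 → List 𝒩 → ℕ
  | [], _, _ => 0
  | y :: b', a, n => if y = z then sh a b' n else 0

@[simp] lemma shz_nil (z : 𝒩) (b n : List 𝒩) : shz z [] b n = 0 := by simp only [shz]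
@[simp] lemma shz_cons (z x : 𝒩) (a' b n : List 𝒩) :
    shz z (x :: a') b n = if x = z then sh a' b n else 0 := by simp only [shz]
@[simp] lemma shz2_nil (z : 𝒩) (a n : List 𝒩) : shz2 z [] a n = 0 := by simp only [shz2]
@[simp] lemma shz2_cons (z y : 𝒩) (b' a n : List 𝒩) :
    shz2 z (y :: b') a n = if y = z then sh a b' n else 0 := by simp only [shz2]

lemma sh_cons (a b : List 𝒩) (z : 𝒩) (n : List 𝒩) :
    sh a b (z :: n) = shz z a b n + shz2 z b a n := by
  rw [sh_cons_match]
  cases a <;> cases b <;> simp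

lemma sh_split (n2 : List 𝒩) : ∀ (n1 a b : List 𝒩),
    sh a b (n1 ++ n2) = ∑ i ∈ Finset.range (a.length+1), ∑ j ∈ Finset.range (b.length+1),
      if i + j = n1.length then sh (a.take i) (b.take j) n1 * sh (a.drop i) (b.drop j) n2
      else 0 := by
  intro n1
  induction n1 with
  | nil =>
    intro a b
    rw [List.nil_append]
    rw [Finset.sum_eq_single 0]
    · rw [Finset.sum_eq_single 0]
      · simp [sh_nil]
      · intro j _ hj
        rw [if_neg (by simp; omega)]
      · intro h
        exact absurd (Finset.mem_range.mpr (by omega)) h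
    · intro i _ hi
      apply Finset.sum_eq_zero
      intro j _
      rw [if_neg (by simp; omega)]
    · intro h
      exact absurd (Finset.mem_range.mpr (by omega)) h
  | cons z n1 ih =>
    intro a b
    rw [List.cons_append, sh_cons]
    have expand : ∀ i j, (if i + j = (z :: n1).length
          then sh (a.take i) (b.take j) (z :: n1) * sh (a.drop i) (b.drop j) n2 else 0)
        = (if i + j = n1.length + 1 then
            shz z (a.take i) (b.take j) n1 * sh (a.drop i) (b.drop j) n2 else 0)
          + (if i + j = n1.length + 1 then
            shz2 z (b.take j) (a.take i) n1 * sh (a.drop i) (b.drop j) n2 else 0) := by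
      intro i j
      rw [sh_cons]
      simp only [List.length_cons]
      split_ifs <;> simp [add_mul]
    simp only [expand, Finset.sum_add_distrib]
    congr 1
    -- part A
    · cases a with
      | nil =>
        simp
      | cons x a' =>
        rw [shz_cons]
        conv_rhs => rw [Finset.sum_range_succ']
        have h0 : (∑ j ∈ Finset.range (b.length+1),
            if 0 + j = n1.length + 1 then
              shz z ((x :: a').take 0) (b.take j) n1 * sh ((x :: a').drop 0) (b.drop j) n2
            else 0) = 0 := by
          apply Finset.sum_eq_zero; intro j _; simp
        rw [h0, add_zero]
        simp only [List.take_succ_cons, List.drop_succ_cons, shz_cons, List.length_cons]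
        have hcond : ∀ i j : ℕ, (i + 1 + j = n1.length + 1) = (i + j = n1.length) :=
          fun i j => propext (by omega)
        simp only [hcond]
        rcases eq_or_ne x z with rfl | hx
        · simp only [if_pos rfl, ih a' b, if_true]
        · simp only [if_neg hx]
          simp
    -- part B
    · cases b with
      | nil =>
        rw [shz2_nil]
        symm
        apply Finset.sum_eq_zero; intro i _
        apply Finset.sum_eq_zero; intro j _
        simp
      | cons y b' =>
        rw [shz2_cons]
        conv_rhs => rw [Finset.sum_comm, Finset.sum_range_succ']
        have h0 : (∑ i ∈ Finset.range (a.length+1),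
            if i + 0 = n1.length + 1 then
              shz2 z ((y :: b').take 0) (a.take i) n1 * sh (a.drop i) ((y :: b').drop 0) n2
            else 0) = 0 := by
          apply Finset.sum_eq_zero; intro i _; simp
        rw [h0, add_zero]
        simp only [List.take_succ_cons, List.drop_succ_cons, shz2_cons, List.length_cons]
        have hcond : ∀ i j : ℕ, (i + (j + 1) = n1.length + 1) = (i + j = n1.length) :=
          fun i j => propext (by omega)
        simp only [hcond]
        rcases eq_or_ne y z with rfl | hy
        · simp only [if_pos rfl, ih a b', if_true]
          exact Finset.sum_comm
        · simp only [if_neg hy]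
          simp

end AuxSh

section AuxPhi
variable {𝒩 k : Type*} [Field k] [CharZero k]

noncomputable def pFinset (a b : List 𝒩) : Finset (List 𝒩) :=
  ((a ++ b).permutations).toFinset

lemma mem_pFinset {a b n : List 𝒩} : n ∈ pFinset a b ↔ n.Perm (a ++ b) := by
  simp [pFinset, List.mem_permutations]

lemma phi_support (M : List 𝒩 → k) (a b : List 𝒩) :
    Function.support (fun n => (sh a b n : k) * M n) ⊆ ↑(pFinset a b) := by
  intro n hn
  simp only [Function.mem_support] at hn
  have h1 : (sh a b n : k) ≠ 0 := fun h => hn (by rw [h, zero_mul])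
  have h2 : sh a b n ≠ 0 := fun h => h1 (by rw [h, Nat.cast_zero])
  exact Finset.mem_coe.mpr (mem_pFinset.mpr (sh_perm n a b h2))

lemma phi_eq_sum (M : List 𝒩 → k) (a b : List 𝒩) :
    (∑ᶠ n, (sh a b n : k) * M n) = ∑ n ∈ pFinset a b, (sh a b n : k) * M n :=
  finsum_eq_finset_sum_of_support_subset _ (phi_support M a b)

lemma perm_shuffle_append {w x y z : List 𝒩} : ((w ++ x) ++ (y ++ z)).Perm ((w ++ y) ++ (x ++ z)) := by
  have swap : (x ++ (y ++ z)).Perm (y ++ (x ++ z)) := by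
    rw [← List.append_assoc, ← List.append_assoc]
    exact List.perm_append_comm.append_right z
  have h1 : (w ++ x) ++ (y ++ z) = w ++ (x ++ (y ++ z)) := by rw [List.append_assoc]
  have h2 : (w ++ y) ++ (x ++ z) = w ++ (y ++ (x ++ z)) := by rw [List.append_assoc]
  rw [h1, h2]
  exact swap.append_left w

lemma phi_mmul (M N : List 𝒩 → k) (a b : List 𝒩) :
    (∑ᶠ n, (sh a b n : k) * mmul M N n)
      = ∑ i ∈ Finset.range (a.length+1), ∑ j ∈ Finset.range (b.length+1),
          (∑ᶠ m, (sh (a.take i) (b.take j) m : k) * M m)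
          * (∑ᶠ m, (sh (a.drop i) (b.drop j) m : k) * N m) := by
  set La := a.length with hLa
  set Lb := b.length with hLb
  rw [phi_eq_sum]
  have hlen : ∀ n ∈ pFinset a b, n.length = La + Lb := by
    intro n hn
    rw [(mem_pFinset.mp hn).length_eq, List.length_append]
  -- step 1: pointwise expansion
  have pern : ∀ n ∈ pFinset a b, (sh a b n : k) * mmul M N n
      = ∑ i ∈ Finset.range (La+1), ∑ j ∈ Finset.range (Lb+1),
          ((sh (a.take i) (b.take j) (n.take (i+j)) : k) * M (n.take (i+j)))
          * ((sh (a.drop i) (b.drop j) (n.drop (i+j)) : k) * N (n.drop (i+j))) := by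
    intro n hn
    have hn' := hlen n hn
    have key : ∀ κ, κ ≤ La + Lb → (sh a b n : k)
        = ∑ i ∈ Finset.range (La+1), ∑ j ∈ Finset.range (Lb+1),
            if i + j = κ then (sh (a.take i) (b.take j) (n.take κ) : k)
              * (sh (a.drop i) (b.drop j) (n.drop κ) : k) else 0 := by
      intro κ hκ
      have hsplit := sh_split (n.drop κ) (n.take κ) a b
      rw [List.take_append_drop] at hsplit
      have hlt : (n.take κ).length = κ := by
        rw [List.length_take, hn']; omega
      rw [hsplit]
      push_cast [hlt]
      rfl
    unfold mmul
    rw [hn', Finset.mul_sum]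
    -- LHS = Σ_κ (sh a b n) * (M take κ * N drop κ)
    have step : ∀ κ ∈ Finset.range (La+Lb+1), (sh a b n : k) * (M (n.take κ) * N (n.drop κ))
        = ∑ i ∈ Finset.range (La+1), ∑ j ∈ Finset.range (Lb+1),
            if i + j = κ then
              ((sh (a.take i) (b.take j) (n.take κ) : k) * M (n.take κ))
              * ((sh (a.drop i) (b.drop j) (n.drop κ) : k) * N (n.drop κ)) else 0 := by
      intro κ hκ
      rw [key κ (by have := Finset.mem_range.mp hκ; omega), Finset.sum_mul]
      apply Finset.sum_congr rfl
      intro i _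
      rw [Finset.sum_mul]
      apply Finset.sum_congr rfl
      intro j _
      split_ifs
      · ring
      · rw [zero_mul]
    rw [Finset.sum_congr rfl step]
    -- now swap κ inside and collapse
    rw [Finset.sum_comm]
    apply Finset.sum_congr rfl
    intro i hi
    rw [Finset.sum_comm]
    apply Finset.sum_congr rfl
    intro j hj
    rw [Finset.sum_eq_single (i+j)]
    · rw [if_pos rfl]
    · intro κ _ hκ
      rw [if_neg (fun h => hκ h.symm)]
    · intro h
      exfalso
      apply h
      rw [Finset.mem_range]
      have := Finset.mem_range.mp hi
      have := Finset.mem_range.mp hj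
      omega
  rw [Finset.sum_congr rfl pern]
  rw [Finset.sum_comm]
  apply Finset.sum_congr rfl
  intro i hi
  rw [Finset.sum_comm]
  apply Finset.sum_congr rfl
  intro j hj
  -- step 3: split the n-sum into a product
  rw [phi_eq_sum, phi_eq_sum, Finset.sum_mul_sum, ← Finset.sum_product']
  set κ := i + j with hκ
  have hi' := Finset.mem_range.mp hi
  have hj' := Finset.mem_range.mp hj
  have hlen1 : ∀ n1 ∈ pFinset (a.take i) (b.take j), n1.length = κ := by
    intro n1 h
    rw [(mem_pFinset.mp h).length_eq, List.length_append, List.length_take,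
      List.length_take, ← hLa, ← hLb]
    omega
  set E1 := pFinset (a.take i) (b.take j)
  set E2 := pFinset (a.drop i) (b.drop j)
  have hinj : Set.InjOn (fun p : List 𝒩 × List 𝒩 => p.1 ++ p.2) ↑(E1 ×ˢ E2) := by
    intro p hp q hq h
    simp only [Finset.coe_product, Set.mem_prod] at hp hq
    have h1 : p.1.length = q.1.length := by
      rw [hlen1 p.1 hp.1, hlen1 q.1 hq.1]
    obtain ⟨h2, h3⟩ := List.append_inj h h1
    exact Prod.ext h2 h3
  have himg : (E1 ×ˢ E2).image (fun p : List 𝒩 × List 𝒩 => p.1 ++ p.2) ⊆ pFinset a b := by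
    intro n hn
    simp only [Finset.mem_image] at hn
    obtain ⟨p, hp, rfl⟩ := hn
    rw [Finset.mem_product] at hp
    apply mem_pFinset.mpr
    have h1 := mem_pFinset.mp hp.1
    have h2 := mem_pFinset.mp hp.2
    have h3 : ((a.take i) ++ (a.drop i)) ++ ((b.take j) ++ (b.drop j)) = a ++ b := by
      rw [List.take_append_drop, List.take_append_drop]
    exact ((h1.append h2).trans perm_shuffle_append).trans (h3 ▸ List.Perm.refl _)
  rw [← Finset.sum_subset himg]
  · rw [Finset.sum_image (fun p hp q hq h => hinj (Finset.mem_coe.mpr hp) (Finset.mem_coe.mpr hq) h)]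
    apply Finset.sum_congr rfl
    intro p hp
    rw [Finset.mem_product] at hp
    have h1 : (p.1 ++ p.2).take κ = p.1 := List.take_left' (hlen1 p.1 hp.1)
    have h2 : (p.1 ++ p.2).drop κ = p.2 := List.drop_left' (hlen1 p.1 hp.1)
    rw [h1, h2]
  · intro n hn hnot
    by_contra hne
    have hA : (sh (a.take i) (b.take j) (n.take κ) : k) ≠ 0 := by
      intro h; apply hne; rw [h]; ring
    have hB : (sh (a.drop i) (b.drop j) (n.drop κ) : k) ≠ 0 := by
      intro h; apply hne; rw [h]; ring
    have hA' : n.take κ ∈ E1 := mem_pFinset.mpr (sh_perm _ _ _ (fun h => hA (by rw[h]; simp)))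
    have hB' : n.drop κ ∈ E2 := mem_pFinset.mpr (sh_perm _ _ _ (fun h => hB (by rw[h]; simp)))
    apply hnot
    rw [Finset.mem_image]
    exact ⟨(n.take κ, n.drop κ), Finset.mem_product.mpr ⟨hA', hB'⟩, List.take_append_drop κ n⟩


lemma Kk_rec00 (j : ℕ) : Kk k (j+1) 0 0 = 0 := by simp [Kk, K_rec00]
lemma Kk_rec0q (j q : ℕ) : Kk k (j+1) 0 (q+1) = Kk k j 0 q := by simp [Kk, K_rec0q]
lemma Kk_recp0 (j p : ℕ) : Kk k (j+1) (p+1) 0 = Kk k j p 0 := by simp [Kk, K_recp0]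
lemma Kk_recpq (j p q : ℕ) :
    Kk k (j+1) (p+1) (q+1) = Kk k j p (q+1) + Kk k j (p+1) q + Kk k j p q := by
  simp only [Kk, K_recpq]; push_cast; ring
lemma Kk_bound (j p q : ℕ) (h : j < p ∨ j < q ∨ p + q < j) : Kk k j p q = 0 := by
  simp [Kk, K_bound j p q h]

lemma K_reindex (j : ℕ) (m : ℕ → ℕ → k) :
    (∑ p ∈ Finset.range (j+1), ∑ q ∈ Finset.range (j+1), Kk k j p q * m (p+1) (q+1))
    + (∑ p ∈ Finset.range (j+1), ∑ q ∈ Finset.range (j+1), Kk k j p q * m (p+1) q)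
    + (∑ p ∈ Finset.range (j+1), ∑ q ∈ Finset.range (j+1), Kk k j p q * m p (q+1))
    = ∑ p ∈ Finset.range (j+1+1), ∑ q ∈ Finset.range (j+1+1), Kk k (j+1) p q * m p q := by
  -- RHS normalization
  have hRHS : (∑ p ∈ Finset.range (j+1+1), ∑ q ∈ Finset.range (j+1+1), Kk k (j+1) p q * m p q)
      = (∑ p ∈ Finset.range (j+1), ∑ q ∈ Finset.range (j+1),
          (Kk k j p (q+1) + Kk k j (p+1) q + Kk k j p q) * m (p+1) (q+1))
        + (∑ p ∈ Finset.range (j+1), Kk k j p 0 * m (p+1) 0)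
        + (∑ q ∈ Finset.range (j+1), Kk k j 0 q * m 0 (q+1)) := by
    rw [Finset.sum_range_succ']
    have hp : ∀ p ∈ Finset.range (j+1),
        (∑ q ∈ Finset.range (j+1+1), Kk k (j+1) (p+1) q * m (p+1) q)
        = (∑ q ∈ Finset.range (j+1),
            (Kk k j p (q+1) + Kk k j (p+1) q + Kk k j p q) * m (p+1) (q+1))
          + Kk k j p 0 * m (p+1) 0 := by
      intro p _
      rw [Finset.sum_range_succ', Kk_recp0]
      apply congrArg (fun x => x + Kk k j p 0 * m (p+1) 0)
      apply Finset.sum_congr rfl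
      intro q _
      rw [Kk_recpq]
    have h0 : (∑ q ∈ Finset.range (j+1+1), Kk k (j+1) 0 q * m 0 q)
        = ∑ q ∈ Finset.range (j+1), Kk k j 0 q * m 0 (q+1) := by
      rw [Finset.sum_range_succ', Kk_rec00, zero_mul, add_zero]
      apply Finset.sum_congr rfl
      intro q _
      rw [Kk_rec0q]
    rw [Finset.sum_congr rfl hp, h0, Finset.sum_add_distrib]
  rw [hRHS]
  -- LHS pieces
  have hL2 : (∑ p ∈ Finset.range (j+1), ∑ q ∈ Finset.range (j+1), Kk k j p q * m (p+1) q)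
      = (∑ p ∈ Finset.range (j+1), ∑ q ∈ Finset.range (j+1), Kk k j p (q+1) * m (p+1) (q+1))
        + (∑ p ∈ Finset.range (j+1), Kk k j p 0 * m (p+1) 0) := by
    rw [← Finset.sum_add_distrib]
    apply Finset.sum_congr rfl
    intro p _
    rw [Finset.sum_range_succ']
    apply congrArg (fun x => x + Kk k j p 0 * m (p+1) 0)
    rw [Finset.sum_range_succ, Kk_bound j p (j+1) (by omega), zero_mul, add_zero]
  have hL3 : (∑ p ∈ Finset.range (j+1), ∑ q ∈ Finset.range (j+1), Kk k j p q * m p (q+1))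
      = (∑ p ∈ Finset.range (j+1), ∑ q ∈ Finset.range (j+1), Kk k j (p+1) q * m (p+1) (q+1))
        + (∑ q ∈ Finset.range (j+1), Kk k j 0 q * m 0 (q+1)) := by
    rw [Finset.sum_range_succ']
    apply congrArg (fun x => x + _)
    rw [Finset.sum_range_succ]
    have : (∑ q ∈ Finset.range (j+1), Kk k j (j+1) q * m (j+1) (q+1)) = 0 := by
      apply Finset.sum_eq_zero
      intro q _
      rw [Kk_bound j (j+1) q (by omega), zero_mul]
    rw [this, add_zero]
  rw [hL2, hL3]
  have hsplit : (∑ p ∈ Finset.range (j+1), ∑ q ∈ Finset.range (j+1),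
      (Kk k j p (q+1) + Kk k j (p+1) q + Kk k j p q) * m (p+1) (q+1))
      = (∑ p ∈ Finset.range (j+1), ∑ q ∈ Finset.range (j+1), Kk k j p (q+1) * m (p+1) (q+1))
      + (∑ p ∈ Finset.range (j+1), ∑ q ∈ Finset.range (j+1), Kk k j (p+1) q * m (p+1) (q+1))
      + (∑ p ∈ Finset.range (j+1), ∑ q ∈ Finset.range (j+1), Kk k j p q * m (p+1) (q+1)) := by
    simp only [← Finset.sum_add_distrib]
    apply Finset.sum_congr rfl
    intro p _
    apply Finset.sum_congr rfl
    intro q _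
    ring
  rw [hsplit]
  ring


lemma phi_munit (a b : List 𝒩) :
    (∑ᶠ n, (sh a b n : k) * munit n) = munit a * munit b := by
  rw [finsum_eq_single _ ([] : List 𝒩)]
  · rw [sh_nil]
    simp only [munit]
    split_ifs with h1 h2 h3 h2 h3 h3 <;> simp_all
  · intro x hx
    simp only [munit, if_neg hx, mul_zero]

lemma phi_S (S : List 𝒩 → k) (hS : Symmetral S) (a b : List 𝒩) :
    (∑ᶠ n, (sh a b n : k) * S n) = S a * S b := by
  rcases eq_or_ne a [] with rfl | ha
  · rw [finsum_eq_single _ b, sh_nil_left, if_pos rfl, Nat.cast_one, one_mul, hS.1, one_mul]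
    intro x hx
    rw [sh_nil_left, if_neg (fun h => hx h.symm), Nat.cast_zero, zero_mul]
  · rcases eq_or_ne b [] with rfl | hb
    · rw [finsum_eq_single _ a, sh_nil_right, if_pos rfl, Nat.cast_one, one_mul, hS.1, mul_one]
      intro x hx
      rw [sh_nil_right, if_neg (fun h => hx h.symm), Nat.cast_zero, zero_mul]
    · exact hS.2 a b ha hb

lemma phi_T (S : List 𝒩 → k) (hS : Symmetral S) (a b : List 𝒩) :
    (∑ᶠ n, (sh a b n : k) * (S n - munit n))
      = (S a - munit a) * (S b - munit b)
        + munit b * (S a - munit a) + munit a * (S b - munit b) := by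
  have h1 : (fun n => (sh a b n : k) * (S n - munit n))
      = fun n => (sh a b n : k) * S n - (sh a b n : k) * munit n := by
    funext n; ring
  rw [h1, finsum_sub_distrib, phi_S S hS, phi_munit]
  · ring
  · exact ((pFinset a b).finite_toSet).subset (phi_support S a b)
  · exact ((pFinset a b).finite_toSet).subset (phi_support munit a b)

lemma munit_mmul (M : List 𝒩 → k) : mmul munit M = M := by
  funext n
  cases n with
  | nil => simp [mmul, munit]
  | cons x n' =>
    simp only [mmul]
    rw [Finset.sum_range_succ']
    have h0 : munit (List.take 0 (x :: n')) * M (List.drop 0 (x :: n')) = M (x :: n') := by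
      simp [munit]
    rw [h0]
    have hz : ∀ i ∈ Finset.range (x :: n').length,
        munit ((x :: n').take (i+1)) * M ((x :: n').drop (i+1)) = 0 := by
      intro i _
      rw [List.take_succ_cons]
      simp [munit]
    rw [Finset.sum_congr rfl hz]
    simp

lemma mpow_vanish (T : List 𝒩 → k) (hT : T [] = 0) :
    ∀ j (w : List 𝒩), w.length < j → mpow T j w = 0 := by
  intro j
  induction j with
  | zero => intro w h; omega
  | succ j ih =>
    intro w h
    show mmul T (mpow T j) w = 0
    apply Finset.sum_eq_zero
    intro i hi
    rcases i with _ | i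
    · rw [List.take_zero, hT, zero_mul]
    · rw [ih (w.drop (i+1)) (by rw [List.length_drop]; have := Finset.mem_range.mp hi; omega),
        mul_zero]

lemma quad_swap (A B C D : Finset ℕ) (c : ℕ → ℕ → k) (f g : ℕ → ℕ → k) :
    (∑ i ∈ A, ∑ κ ∈ B, ∑ p ∈ C, ∑ q ∈ D, c p q * (f i p * g κ q))
      = ∑ p ∈ C, ∑ q ∈ D, c p q * ((∑ i ∈ A, f i p) * (∑ κ ∈ B, g κ q)) := by
  have inner : ∀ p q, c p q * ((∑ i ∈ A, f i p) * (∑ κ ∈ B, g κ q))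
      = ∑ i ∈ A, ∑ κ ∈ B, c p q * (f i p * g κ q) := by
    intro p q
    rw [Finset.sum_mul_sum, Finset.mul_sum]
    apply Finset.sum_congr rfl
    intro i _
    rw [Finset.mul_sum]
  have h1 : ∀ (u : Finset ℕ) (G : ℕ → ℕ → ℕ → k),
      (∑ i ∈ u, ∑ p ∈ C, ∑ q ∈ D, G i p q) = ∑ p ∈ C, ∑ q ∈ D, ∑ i ∈ u, G i p q := by
    intro u G
    rw [Finset.sum_comm]
    exact Finset.sum_congr rfl (fun p _ => Finset.sum_comm)
  calc (∑ i ∈ A, ∑ κ ∈ B, ∑ p ∈ C, ∑ q ∈ D, c p q * (f i p * g κ q))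
      = ∑ i ∈ A, ∑ p ∈ C, ∑ q ∈ D, ∑ κ ∈ B, c p q * (f i p * g κ q) :=
        Finset.sum_congr rfl (fun i _ => h1 B _)
    _ = ∑ p ∈ C, ∑ q ∈ D, ∑ i ∈ A, ∑ κ ∈ B, c p q * (f i p * g κ q) := h1 A _
    _ = ∑ p ∈ C, ∑ q ∈ D, c p q * ((∑ i ∈ A, f i p) * (∑ κ ∈ B, g κ q)) :=
        Finset.sum_congr rfl (fun p _ => Finset.sum_congr rfl (fun q _ => (inner p q).symm))

lemma phi_pow (S : List 𝒩 → k) (hS : Symmetral S) :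
    ∀ j (a b : List 𝒩),
    (∑ᶠ n, (sh a b n : k) * mpow (fun m => S m - munit m) j n)
      = ∑ p ∈ Finset.range (j+1), ∑ q ∈ Finset.range (j+1),
          Kk k j p q * (mpow (fun m => S m - munit m) p a
            * mpow (fun m => S m - munit m) q b) := by
  set T : List 𝒩 → k := fun m => S m - munit m with hT
  intro j
  induction j with
  | zero =>
    intro a b
    have : (∑ᶠ n, (sh a b n : k) * mpow T 0 n) = munit a * munit b := phi_munit a b
    rw [this]
    rw [Finset.sum_range_one, Finset.sum_range_one]
    rw [show Kk k 0 0 0 = 1 by simp [Kk, K_zero]]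
    show munit a * munit b = 1 * (munit a * munit b)
    rw [one_mul]
  | succ j ih =>
    intro a b
    show (∑ᶠ n, (sh a b n : k) * mmul T (mpow T j) n) = _
    rw [phi_mmul]
    -- rewrite each factor
    have hfac : ∀ i ∈ Finset.range (a.length+1), ∀ κ ∈ Finset.range (b.length+1),
        (∑ᶠ m, (sh (a.take i) (b.take κ) m : k) * T m)
          * (∑ᶠ m, (sh (a.drop i) (b.drop κ) m : k) * mpow T j m)
        = ∑ p ∈ Finset.range (j+1), ∑ q ∈ Finset.range (j+1),
            (Kk k j p q * ((T (a.take i) * mpow T p (a.drop i)) * (T (b.take κ) * mpow T q (b.drop κ)))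
            + Kk k j p q * ((T (a.take i) * mpow T p (a.drop i)) * (munit (b.take κ) * mpow T q (b.drop κ)))
            + Kk k j p q * ((munit (a.take i) * mpow T p (a.drop i)) * (T (b.take κ) * mpow T q (b.drop κ)))) := by
      intro i _ κ _
      have hTx : ∀ x : List 𝒩, S x - munit x = T x := fun x => rfl
      rw [phi_T S hS, ih]
      simp only [hTx]
      rw [Finset.mul_sum]
      apply Finset.sum_congr rfl
      intro p _
      rw [Finset.mul_sum]
      apply Finset.sum_congr rfl
      intro q _
      ring
    rw [Finset.sum_congr rfl (fun i hi => Finset.sum_congr rfl (fun κ hκ => hfac i hi κ hκ))]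
    -- split into three quadruple sums
    simp only [Finset.sum_add_distrib]
    rw [quad_swap, quad_swap, quad_swap]
    -- evaluate the inner single sums
    have hTp : ∀ (w : List 𝒩) p, (∑ i ∈ Finset.range (w.length+1), T (w.take i) * mpow T p (w.drop i))
        = mpow T (p+1) w := by
      intro w p
      rfl
    have hMp : ∀ (w : List 𝒩) p, (∑ i ∈ Finset.range (w.length+1), munit (w.take i) * mpow T p (w.drop i))
        = mpow T p w := by
      intro w p
      have : (∑ i ∈ Finset.range (w.length+1), munit (w.take i) * mpow T p (w.drop i))
          = mmul munit (mpow T p) w := rfl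
      rw [this, munit_mmul]
    simp only [hTp, hMp]
    exact K_reindex j (fun p q => mpow T p a * mpow T q b)

end AuxPhi

/-- the mould logarithm of a symmetral mould is alternal. -/
theorem mlog_symmetral_alternal
    {𝒩 k : Type*} [Nonempty 𝒩] [Field k] [CharZero k]
    (S : List 𝒩 → k) (hS0 : S [] = 1) (hS : Symmetral S) :
    Alternal (mlog S) := by
  classical
  set T : List 𝒩 → k := fun m => S m - munit m with hT
  have hT0 : T [] = 0 := by
    simp [hT, munit, hS0]
  constructor
  · simp [mlog]
  · intro a b ha hb
    set L := a.length + b.length with hL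
    have hlen : ∀ n ∈ pFinset a b, n.length = L := by
      intro n hn
      rw [(mem_pFinset.mp hn).length_eq, List.length_append]
    rw [phi_eq_sum]
    have key : ∀ n ∈ pFinset a b, (sh a b n : k) * mlog S n
        = ∑ j ∈ Finset.Icc 1 L, ((-1:k))^(j-1)/j * ((sh a b n : k) * mpow T j n) := by
      intro n hn
      simp only [mlog, hlen n hn]
      rw [Finset.mul_sum]
      apply Finset.sum_congr rfl
      intro j _
      ring
    rw [Finset.sum_congr rfl key, Finset.sum_comm]
    have inner : ∀ j ∈ Finset.Icc 1 L,
        (∑ n ∈ pFinset a b, ((-1:k))^(j-1)/j * ((sh a b n : k) * mpow T j n))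
        = ∑ p ∈ Finset.range (L+1), ∑ q ∈ Finset.range (L+1),
            ((-1:k))^(j-1)/j * (Kk k j p q * (mpow T p a * mpow T q b)) := by
      intro j hj
      have hj' := Finset.mem_Icc.mp hj
      rw [← Finset.mul_sum, ← phi_eq_sum, phi_pow S hS j a b]
      -- extend ranges from j+1 to L+1
      have hsub : Finset.range (j+1) ⊆ Finset.range (L+1) :=
        Finset.range_subset_range.mpr (by omega)
      have hx : ∀ p ∈ Finset.range (j+1),
          (∑ q ∈ Finset.range (j+1), Kk k j p q * (mpow T p a * mpow T q b))
          = ∑ q ∈ Finset.range (L+1), Kk k j p q * (mpow T p a * mpow T q b) := by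
        intro p _
        apply Finset.sum_subset hsub
        intro q _ hq
        rw [Kk_bound j p q (Or.inr (Or.inl (by
          have := Finset.mem_range.not.mp hq; omega))), zero_mul]
      rw [Finset.sum_congr rfl hx]
      have hy : (∑ p ∈ Finset.range (j+1), ∑ q ∈ Finset.range (L+1),
            Kk k j p q * (mpow T p a * mpow T q b))
          = ∑ p ∈ Finset.range (L+1), ∑ q ∈ Finset.range (L+1),
            Kk k j p q * (mpow T p a * mpow T q b) := by
        apply Finset.sum_subset hsub
        intro p _ hp
        apply Finset.sum_eq_zero
        intro q _
        rw [Kk_bound j p q (Or.inl (by have := Finset.mem_range.not.mp hp; omega)), zero_mul]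
      rw [hy, Finset.mul_sum]
      apply Finset.sum_congr rfl
      intro p _
      rw [Finset.mul_sum]
    rw [Finset.sum_congr rfl inner]
    -- swap j to innermost
    have tri : (∑ j ∈ Finset.Icc 1 L, ∑ p ∈ Finset.range (L+1), ∑ q ∈ Finset.range (L+1),
          ((-1:k))^(j-1)/j * (Kk k j p q * (mpow T p a * mpow T q b)))
        = ∑ p ∈ Finset.range (L+1), ∑ q ∈ Finset.range (L+1), ∑ j ∈ Finset.Icc 1 L,
          ((-1:k))^(j-1)/j * (Kk k j p q * (mpow T p a * mpow T q b)) := by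
      rw [Finset.sum_comm]
      exact Finset.sum_congr rfl (fun p _ => Finset.sum_comm)
    rw [tri]
    apply Finset.sum_eq_zero
    intro p hp
    apply Finset.sum_eq_zero
    intro q hq
    have hterm : (∑ j ∈ Finset.Icc 1 L, ((-1:k))^(j-1)/j * (Kk k j p q * (mpow T p a * mpow T q b)))
        = (∑ j ∈ Finset.Icc 1 L, ((-1:k))^(j-1)/j * Kk k j p q) * (mpow T p a * mpow T q b) := by
      rw [Finset.sum_mul]
      apply Finset.sum_congr rfl
      intro j _
      ring
    rw [hterm]
    rcases Nat.eq_zero_or_pos p with rfl | hp1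
    · have : mpow T 0 a = 0 := by
        simp only [mpow, munit, if_neg ha]
      rw [this, zero_mul, mul_zero]
    rcases Nat.eq_zero_or_pos q with rfl | hq1
    · have : mpow T 0 b = 0 := by
        simp only [mpow, munit, if_neg hb]
      rw [this, mul_zero, mul_zero]
    rcases le_or_gt (p + q) L with hpq | hpq
    · rw [sigma_zero p q L hp1 hq1 hpq, zero_mul]
    · have hcases : a.length < p ∨ b.length < q := by
        have := Finset.mem_range.mp hp
        have := Finset.mem_range.mp hq
        omega
      rcases hcases with h | h
      · rw [mpow_vanish T hT0 p a h, zero_mul, mul_zero]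
      · rw [mpow_vanish T hT0 q b h, mul_zero, mul_zero]
end
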